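/- Let ε_k ≥ 0 and δ_k ∈ [0,1] for 0 ≤ k ≤ K, and suppose real-valued random mechanisms M_k, M_k' satisfy P(M_k ∈ T) ≤ e^{ε_k} P(M_k' ∈ T) + δ_k for every measurable set T, with the M_k mutually independent and the M_k' mutually independent. Then for product sets T = ∏_{k=0}^K T^{(k)}, P((M_0,…,M_K) ∈ T) ≤ e^{∑_{k=0}^K ε_k} P((M_0',…,M_K') ∈ T) + e^{∑_{k=0}^K ε_k}(∏_{k=0}^K (1 + δ_k) - 1). -/

import Mathlib

open MeasureTheory ProbabilityTheory
open scoped MeasureTheory ProbabilityTheory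

lemma dp_aux_prod {ι : Type*} (s : Finset ι) (g d : ι → ℝ)
    (hg0 : ∀ i ∈ s, 0 ≤ g i) (hg1 : ∀ i ∈ s, g i ≤ 1) (hd : ∀ i ∈ s, 0 ≤ d i) :
    ∏ i ∈ s, (g i + d i) ≤ ∏ i ∈ s, g i + (∏ i ∈ s, (1 + d i) - 1) := by
  classical
  induction s using Finset.induction_on with
  | empty => simp
  | @insert a s ha ih =>
    have hga := hg0 a (Finset.mem_insert_self a s)
    have hga1 := hg1 a (Finset.mem_insert_self a s)
    have hda := hd a (Finset.mem_insert_self a s)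
    have hP : ∏ i ∈ s, (g i + d i) ≤ ∏ i ∈ s, g i + (∏ i ∈ s, (1 + d i) - 1) :=
      ih (fun i hi => hg0 i (Finset.mem_insert_of_mem hi))
        (fun i hi => hg1 i (Finset.mem_insert_of_mem hi))
        (fun i hi => hd i (Finset.mem_insert_of_mem hi))
    have hP0 : 0 ≤ ∏ i ∈ s, (g i + d i) :=
      Finset.prod_nonneg fun i hi => by
        have h1 := hg0 i (Finset.mem_insert_of_mem hi)
        have h2 := hd i (Finset.mem_insert_of_mem hi); linarith
    have hG0 : 0 ≤ ∏ i ∈ s, g i :=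
      Finset.prod_nonneg fun i hi => hg0 i (Finset.mem_insert_of_mem hi)
    have hG1 : ∏ i ∈ s, g i ≤ 1 :=
      Finset.prod_le_one (fun i hi => hg0 i (Finset.mem_insert_of_mem hi))
        (fun i hi => hg1 i (Finset.mem_insert_of_mem hi))
    have hD1 : 1 ≤ ∏ i ∈ s, (1 + d i) :=
      calc (1:ℝ) = ∏ _i ∈ s, 1 := by simp
        _ ≤ ∏ i ∈ s, (1 + d i) :=
          Finset.prod_le_prod (fun i _ => zero_le_one)
            (fun i hi => by have h := hd i (Finset.mem_insert_of_mem hi); linarith)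
    rw [Finset.prod_insert ha, Finset.prod_insert ha, Finset.prod_insert ha]
    nlinarith [mul_le_mul_of_nonneg_left hP (by linarith : (0:ℝ) ≤ g a + d a)]

theorem dp_composition
    {Ω Ω' : Type*} [MeasureSpace Ω] [MeasureSpace Ω']
    [IsProbabilityMeasure (ℙ : Measure Ω)] [IsProbabilityMeasure (ℙ : Measure Ω')]
    (K : ℕ) (M : Fin (K + 1) → Ω → ℝ) (M' : Fin (K + 1) → Ω' → ℝ)
    (ε δ : Fin (K + 1) → ℝ)
    (hε : ∀ k, 0 ≤ ε k) (hδ : ∀ k, δ k ∈ Set.Icc (0 : ℝ) 1)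
    (hMmeas : ∀ k, Measurable (M k)) (hM'meas : ∀ k, Measurable (M' k))
    (hind : iIndepFun M ℙ)
    (hind' : iIndepFun M' ℙ)
    (hDP : ∀ k, ∀ T : Set ℝ, MeasurableSet T →
      (ℙ (M k ⁻¹' T)).toReal ≤ Real.exp (ε k) * (ℙ (M' k ⁻¹' T)).toReal + δ k)
    (T : Fin (K + 1) → Set ℝ) (hT : ∀ k, MeasurableSet (T k)) :
    (ℙ {ω | ∀ k, M k ω ∈ T k}).toReal ≤
      Real.exp (∑ k, ε k) * (ℙ {ω | ∀ k, M' k ω ∈ T k}).toReal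
        + Real.exp (∑ k, ε k) * (∏ k, (1 + δ k) - 1) := by
  have hset : {ω | ∀ k, M k ω ∈ T k} = ⋂ k, M k ⁻¹' T k := by
    ext ω; simp [Set.mem_iInter]
  have hset' : {ω | ∀ k, M' k ω ∈ T k} = ⋂ k, M' k ⁻¹' T k := by
    ext ω; simp [Set.mem_iInter]
  have hprod : ℙ (⋂ k, M k ⁻¹' T k) = ∏ k, ℙ (M k ⁻¹' T k) :=
    hind.meas_iInter fun k => ⟨T k, hT k, rfl⟩
  have hprod' : ℙ (⋂ k, M' k ⁻¹' T k) = ∏ k, ℙ (M' k ⁻¹' T k) :=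
    hind'.meas_iInter fun k => ⟨T k, hT k, rfl⟩
  set p : Fin (K + 1) → ℝ := fun k => (ℙ (M k ⁻¹' T k)).toReal with hp
  set q : Fin (K + 1) → ℝ := fun k => (ℙ (M' k ⁻¹' T k)).toReal with hq
  have hq0 : ∀ k, 0 ≤ q k := fun k => ENNReal.toReal_nonneg
  have hq1 : ∀ k, q k ≤ 1 := fun k => by
    have := prob_le_one (μ := (ℙ : Measure Ω')) (s := M' k ⁻¹' T k)
    simpa [hq] using ENNReal.toReal_mono ENNReal.one_ne_top this
  have hp0 : ∀ k, 0 ≤ p k := fun k => ENNReal.toReal_nonneg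
  rw [hset, hset', hprod, hprod', ENNReal.toReal_prod, ENNReal.toReal_prod]
  have step1 : ∏ k, p k ≤ ∏ k, Real.exp (ε k) * (q k + δ k) := by
    apply Finset.prod_le_prod (fun k _ => hp0 k)
    intro k _
    have h1 := hDP k (T k) (hT k)
    have h2 : Real.exp (ε k) * (q k + δ k) =
        Real.exp (ε k) * q k + Real.exp (ε k) * δ k := by ring
    have h3 : δ k ≤ Real.exp (ε k) * δ k := by
      nlinarith [Real.one_le_exp (hε k), (hδ k).1]
    calc p k ≤ Real.exp (ε k) * q k + δ k := h1
      _ ≤ Real.exp (ε k) * (q k + δ k) := by rw [h2]; linarith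
  have step2 : ∏ k, Real.exp (ε k) * (q k + δ k)
      = Real.exp (∑ k, ε k) * ∏ k, (q k + δ k) := by
    rw [Finset.prod_mul_distrib, ← Real.exp_sum]
  have step3 : ∏ k, (q k + δ k) ≤ ∏ k, q k + (∏ k, (1 + δ k) - 1) :=
    dp_aux_prod Finset.univ q δ (fun k _ => hq0 k) (fun k _ => hq1 k)
      (fun k _ => (hδ k).1)
  calc ∏ k, p k ≤ Real.exp (∑ k, ε k) * ∏ k, (q k + δ k) := by
        rw [← step2]; exact step1
    _ ≤ Real.exp (∑ k, ε k) * (∏ k, q k + (∏ k, (1 + δ k) - 1)) :=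
        mul_le_mul_of_nonneg_left step3 (Real.exp_nonneg _)
    _ = Real.exp (∑ k, ε k) * ∏ k, q k
        + Real.exp (∑ k, ε k) * (∏ k, (1 + δ k) - 1) := by ring
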